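/- For a connected small category C, the Lusternik–Schnirelmann category satisfies ccat(C) ≤ cTC(C), where cTC(C) = cD(p₁,p₂) for the projections p₁, p₂ : C × C → C. -/

import Mathlib

open CategoryTheory

universe v₁ v₂ v₃ u₁ u₂ u₃

/-- A subcategory of `C`: a set of objects and sets of arrows closed under identities and
composition, whose arrows have source and target in the subcategory. -/
structure Subcat (C : Type u₁) [Category.{v₁} C] where
  objs : Set C
  homs : ∀ x y : C, Set (x ⟶ y)
  id_mem : ∀ {x : C}, x ∈ objs → 𝟙 x ∈ homs x x
  comp_mem : ∀ {x y z : C} {f : x ⟶ y} {g : y ⟶ z}, f ∈ homs x y → g ∈ homs y z → f ≫ g ∈ homs x z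
  src_mem : ∀ {x y : C} {f : x ⟶ y}, f ∈ homs x y → x ∈ objs
  tgt_mem : ∀ {x y : C} {f : x ⟶ y}, f ∈ homs x y → y ∈ objs

variable {C : Type u₁} [Category.{v₁} C]

/-- The type of objects of a subcategory. -/
def Subcat.Obj (U : Subcat C) : Type u₁ := {x : C // x ∈ U.objs}

instance (U : Subcat C) : Category U.Obj where
  Hom x y := {f : x.1 ⟶ y.1 // f ∈ U.homs x.1 y.1}
  id x := ⟨𝟙 x.1, U.id_mem x.2⟩
  comp f g := ⟨f.1 ≫ g.1, U.comp_mem f.2 g.2⟩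
  id_comp f := Subtype.ext (Category.id_comp f.1)
  comp_id f := Subtype.ext (Category.comp_id f.1)
  assoc f g h := Subtype.ext (Category.assoc f.1 g.1 h.1)

/-- The inclusion functor of a subcategory. -/
def Subcat.incl (U : Subcat C) : U.Obj ⥤ C where
  obj x := x.1
  map f := f.1

/-- A chain of composable arrows lies in the subcategory `U`. -/
def Subcat.ContainsChain (U : Subcat C) {m : ℕ} (c : Fin (m + 1) → C)
    (f : ∀ i : Fin m, c i.castSucc ⟶ c i.succ) : Prop :=
  (∀ i, c i ∈ U.objs) ∧ ∀ i, f i ∈ U.homs (c i.castSucc) (c i.succ)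

/-- A family of subcategories is a geometric cover if every finite chain of composable
arrows lies in some member of the family. -/
def GeometricCover {ι : Type} (U : ι → Subcat C) : Prop :=
  ∀ (m : ℕ) (c : Fin (m + 1) → C) (f : ∀ i : Fin m, c i.castSucc ⟶ c i.succ),
    ∃ i : ι, (U i).ContainsChain c f

/-- Two functors are homotopic if they are connected by a finite zigzag of natural
transformations. -/
def Homotopic {A : Type u₂} {B : Type u₃} [Category.{v₂} A] [Category.{v₃} B]
    (F G : A ⥤ B) : Prop :=
  Zigzag F G

variable {D : Type u₂} [Category.{v₂} D]

/-- `C` admits a geometric cover by `n + 1` homotopy domains for `F` and `G`. -/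
def DistLE (n : ℕ) (F G : C ⥤ D) : Prop :=
  ∃ U : Fin (n + 1) → Subcat C, GeometricCover U ∧
    ∀ i, Homotopic ((U i).incl ⋙ F) ((U i).incl ⋙ G)

/-- The homotopic distance between two functors, as an extended natural number. -/
noncomputable def cD (F G : C ⥤ D) : ℕ∞ :=
  sInf {n : ℕ∞ | ∃ m : ℕ, n = (m : ℕ∞) ∧ DistLE m F G}

/-- The categorical complexity of `C`: the homotopic distance between the projections. -/
noncomputable def cTC (A : Type u₂) [Category.{v₂} A] : ℕ∞ :=
  cD (CategoryTheory.Prod.fst A A) (CategoryTheory.Prod.snd A A)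

/-- The (normalized) Lusternik–Schnirelmann category of a small category: the least `n`
such that `C` admits a geometric cover by `n + 1` subcategories whose inclusions are
homotopic to constant functors. -/
noncomputable def ccat (A : Type u₂) [Category.{v₂} A] : ℕ∞ :=
  sInf {n : ℕ∞ | ∃ m : ℕ, n = (m : ℕ∞) ∧
    ∃ U : Fin (m + 1) → Subcat A, GeometricCover U ∧
      ∀ i, ∃ a : A, Homotopic ((U i).incl) ((Functor.const (U i).Obj).obj a)}

/-- Pullback of a subcategory of `A × A` along `a ↦ (a, a₀)`. -/
def pullSub (A : Type u₂) [Category.{v₂} A] (a₀ : A) (U : Subcat (A × A)) : Subcat A where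
  objs := {a | (a, a₀) ∈ U.objs}
  homs x y := {f | (f, 𝟙 a₀) ∈ U.homs (x, a₀) (y, a₀)}
  id_mem h := U.id_mem h
  comp_mem hf hg := by
    have := U.comp_mem hf hg
    simpa using this
  src_mem hf := U.src_mem hf
  tgt_mem hf := U.tgt_mem hf

/-- The functor from the pullback subcategory into the original one. -/
def pullSubFun (A : Type u₂) [Category.{v₂} A] (a₀ : A) (U : Subcat (A × A)) :
    (pullSub A a₀ U).Obj ⥤ U.Obj where
  obj x := ⟨(x.1, a₀), x.2⟩
  map f := ⟨(f.1, 𝟙 a₀), f.2⟩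
  map_id _ := rfl
  map_comp f g := Subtype.ext (Prod.ext rfl (Category.id_comp (𝟙 a₀)).symm)

/-- For a connected small category, `ccat(C) ≤ cTC(C)`. -/
theorem ccat_le_cTC (A : Type u₂) [Category.{v₂} A] [IsConnected A] :
    ccat A ≤ cTC A := by
  obtain ⟨a₀⟩ : Nonempty A := inferInstance
  apply sInf_le_sInf
  rintro n ⟨m, rfl, U, hcov, hhom⟩
  refine ⟨m, rfl, fun i => pullSub A a₀ (U i), ?_, ?_⟩
  · intro k c f
    obtain ⟨i, hobjs, hhoms⟩ := hcov k (fun j => (c j, a₀)) (fun j => (f j, 𝟙 a₀))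
    exact ⟨i, hobjs, hhoms⟩
  · intro i
    refine ⟨a₀, ?_⟩
    have h := hhom i
    have h2 : Zigzag (pullSubFun A a₀ (U i) ⋙ ((U i).incl ⋙ CategoryTheory.Prod.fst A A))
        (pullSubFun A a₀ (U i) ⋙ ((U i).incl ⋙ CategoryTheory.Prod.snd A A)) :=
      zigzag_obj_of_zigzag ((Functor.whiskeringLeft _ _ _).obj (pullSubFun A a₀ (U i))) h
    exact h2
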